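/- Let w ∈ M_n(ℂ) be a complex Hadamard matrix, i.e. a unitary all of whose entries have modulus n^{-1/2}. Then the linear span of the set of products { w d w* d' : d, d' ∈ Δ } is all of M_n(ℂ), where Δ ⊂ M_n(ℂ) is the algebra of diagonal matrices. That is, the spin-model commuting square associated to w is non-degenerate. -/

import Mathlib

open Matrix

/-- For a complex Hadamard matrix `w ∈ M_n(ℂ)` (a unitary all of whose
entries have modulus `n^(-1/2)`), the linear span of the products `w d w* d'` with
`d, d'` diagonal is all of `M_n(ℂ)`: the spin-model commuting square of `w` is
non-degenerate. -/
theorem spin_model_nondegenerate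
    (n : ℕ) (w : Matrix (Fin n) (Fin n) ℂ)
    (hw : w * wᴴ = 1 ∧ wᴴ * w = 1)
    (hmod : ∀ i j : Fin n, ‖w i j‖ = 1 / Real.sqrt n) :
    Submodule.span ℂ
      {x : Matrix (Fin n) (Fin n) ℂ |
        ∃ d d' : Fin n → ℂ,
          x = w * Matrix.diagonal d * wᴴ * Matrix.diagonal d'} = ⊤ := by
  rcases Nat.eq_zero_or_pos n with hn | hn
  · subst hn
    have : Subsingleton (Matrix (Fin 0) (Fin 0) ℂ) := by
      constructor; intro a b; ext i j; exact i.elim0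
    exact Subsingleton.elim _ _
  -- entries are nonzero
  have hne : ∀ i j : Fin n, w i j ≠ 0 := by
    intro i j h
    have := hmod i j
    rw [h, norm_zero] at this
    have hs : Real.sqrt n > 0 := Real.sqrt_pos.2 (by exact_mod_cast hn)
    have : (0:ℝ) = 1 / Real.sqrt n := this
    field_simp at this
    simp at this
  -- each std basis matrix lies in the set itself
  have hstd : ∀ i l : Fin n,
      Matrix.single i l (1:ℂ) ∈
        {x : Matrix (Fin n) (Fin n) ℂ |
          ∃ d d' : Fin n → ℂ,
            x = w * Matrix.diagonal d * wᴴ * Matrix.diagonal d'} := by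
    intro i l
    refine ⟨fun k => star (w i k) * (star (w l k))⁻¹, Pi.single l 1, ?_⟩
    ext p q
    rw [Matrix.mul_diagonal]
    by_cases hq : q = l
    · rw [hq, Pi.single_eq_same, mul_one]
      rw [Matrix.mul_apply]
      simp only [Matrix.mul_diagonal, Matrix.conjTranspose_apply]
      have key : ∀ k, w p k * (star (w i k) * (star (w l k))⁻¹) * star (w l k)
          = w p k * star (w i k) := by
        intro k
        have hk : star (w l k) ≠ 0 := star_ne_zero.2 (hne l k)
        field_simp
      rw [Finset.sum_congr rfl fun k _ => key k]
      have h1 : (w * wᴴ) p i = (1 : Matrix (Fin n) (Fin n) ℂ) p i := by rw [hw.1]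
      rw [Matrix.mul_apply] at h1
      simp only [Matrix.conjTranspose_apply] at h1
      rw [h1]
      by_cases hp : p = i
      · subst hp
        rw [Matrix.single_apply_same, Matrix.one_apply_eq]
      · rw [Matrix.single_apply_of_ne _ _ _ _ _ (fun h => hp h.1.symm),
          Matrix.one_apply_ne hp]
    · rw [Pi.single_eq_of_ne hq, mul_zero,
        Matrix.single_apply_of_ne _ _ _ _ _ (fun h => hq h.2.symm)]
  -- conclude
  rw [eq_top_iff]
  intro A _
  rw [Matrix.matrix_eq_sum_single A]
  apply Submodule.sum_mem
  intro i _
  apply Submodule.sum_mem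
  intro j _
  have : Matrix.single i j (A i j) = A i j • Matrix.single i j (1:ℂ) := by
    ext p q
    simp [Matrix.single, Matrix.smul_apply, mul_ite]
  rw [this]
  exact Submodule.smul_mem _ _ (Submodule.subset_span (hstd i j))
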